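/- For all 0<q<1 and every integer n≥1, the offset satisfies b_n(q) < 1; equivalently, the sum Σ_{k=1}^{n} λ_{k−1}(q)·λ_{n−k}(q) is strictly less than n·κ(q)² + 1. -/

import Mathlib

/-- Partial product of the Euler function: `λ_k(q) = ∏_{i=1}^k (1 - q^i)`, with `λ_0(q) = 1`. -/
noncomputable def eulerLam (q : ℝ) (k : ℕ) : ℝ := ∏ i ∈ Finset.range k, (1 - q ^ (i + 1))

/-- The Euler function `κ(q) = ∏_{i=1}^∞ (1 - q^i)`. -/
noncomputable def eulerKappa (q : ℝ) : ℝ := ∏' i : ℕ, (1 - q ^ (i + 1))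

/-- The tail product `μ_n(q) = ∏_{i=n}^∞ (1 - q^i)`. -/
noncomputable def eulerMu (q : ℝ) (n : ℕ) : ℝ := ∏' i : ℕ, (1 - q ^ (n + i))

/-- The offset `b_n(q) = Σ_{k=1}^n λ_{k-1}(q) λ_{n-k}(q) - n κ(q)²`, the expected number of
posts in a random graph order on `n` elements minus `n κ(q)²`. -/
noncomputable def postOffset (q : ℝ) (n : ℕ) : ℝ :=
  (∑ k ∈ Finset.Icc 1 n, eulerLam q (k - 1) * eulerLam q (n - k)) - n * eulerKappa q ^ 2

section aux
variable {q : ℝ} (hq0 : 0 < q) (hq1 : q < 1)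

lemma eulerLam_succ (k : ℕ) : eulerLam q (k+1) = eulerLam q k * (1 - q ^ (k+1)) :=
  Finset.prod_range_succ _ _

lemma eulerLam_zero : eulerLam q 0 = 1 := by simp [eulerLam]

include hq0 hq1

lemma factor_pos (i : ℕ) : 0 < 1 - q ^ (i+1) := by
  have : q ^ (i+1) < 1 := pow_lt_one₀ hq0.le hq1 (Nat.succ_ne_zero i)
  linarith

lemma eulerLam_pos (k : ℕ) : 0 < eulerLam q k :=
  Finset.prod_pos fun i _ => factor_pos hq0 hq1 i

lemma eulerLam_le_one (k : ℕ) : eulerLam q k ≤ 1 :=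
  Finset.prod_le_one (fun i _ => (factor_pos hq0 hq1 i).le)
    (fun i _ => by have := pow_pos hq0 (i+1); linarith)

lemma eulerLam_anti : Antitone (eulerLam q) := by
  apply antitone_nat_of_succ_le
  intro n
  rw [eulerLam_succ]
  have h1 := eulerLam_pos hq0 hq1 n
  have h2 := pow_pos hq0 (n+1)
  nlinarith

set_option maxHeartbeats 800000 in
lemma summable_log : Summable (fun i : ℕ => Real.log (1 - q ^ (i+1))) := by
  rw [← summable_neg_iff]
  refine Summable.of_nonneg_of_le (f := fun i => q ^ i * (q / (1-q))) ?_ ?_ ?_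
  · intro i
    have h1 := factor_pos hq0 hq1 i
    have h2 := pow_pos hq0 (i+1)
    simp only [neg_nonneg]
    exact Real.log_nonpos (by linarith) (by linarith)
  · intro i
    have h1 := factor_pos hq0 hq1 i
    have hple : q ^ (i+1) ≤ q := by
      calc q ^ (i+1) ≤ q ^ 1 := pow_le_pow_of_le_one hq0.le hq1.le (by omega)
      _ = q := pow_one q
    have h2 : -Real.log (1 - q ^ (i+1)) = Real.log (1 - q ^ (i+1))⁻¹ := (Real.log_inv _).symm
    rw [h2]
    have h3 : Real.log (1 - q ^ (i+1))⁻¹ ≤ (1 - q ^ (i+1))⁻¹ - 1 :=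
      Real.log_le_sub_one_of_pos (inv_pos.2 h1)
    have h4 : (1 - q ^ (i+1))⁻¹ - 1 = q ^ (i+1) / (1 - q ^ (i+1)) := by
      field_simp
      ring
    have hw : (0:ℝ) < 1 - q := by linarith
    have h5 : q ^ (i+1) / (1 - q ^ (i+1)) ≤ q ^ (i+1) / (1-q) := by
      have := pow_pos hq0 (i+1)
      gcongr <;> linarith
    have h6 : q ^ (i+1) / (1-q) = q ^ i * (q / (1-q)) := by
      rw [pow_succ]; ring
    show Real.log (1 - q ^ (i + 1))⁻¹ ≤ q ^ i * (q / (1 - q))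
    rw [← h6]; linarith
  · exact (summable_geometric_of_lt_one hq0.le hq1).mul_right _

lemma eulerKappa_tendsto :
    Filter.Tendsto (eulerLam q) Filter.atTop (nhds (eulerKappa q)) := by
  have hs := (summable_log hq0 hq1).hasSum.rexp
  have heq : (Real.exp ∘ fun i : ℕ => Real.log (1 - q ^ (i+1))) = fun i : ℕ => 1 - q ^ (i+1) :=
    funext fun i => Real.exp_log (factor_pos hq0 hq1 i)
  rw [heq] at hs
  have hk : eulerKappa q = Real.exp (∑' i : ℕ, Real.log (1 - q ^ (i+1))) := by
    rw [eulerKappa, hs.tprod_eq]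
  rw [hk]
  exact hs.tendsto_prod_nat

lemma eulerKappa_le_lam (n : ℕ) : eulerKappa q ≤ eulerLam q n :=
  le_of_tendsto (eulerKappa_tendsto hq0 hq1)
    (Filter.eventually_atTop.2 ⟨n, fun m hm => eulerLam_anti hq0 hq1 hm⟩)

lemma d_nonneg (n : ℕ) : 0 ≤ eulerLam q n - eulerKappa q :=
  sub_nonneg.2 (eulerKappa_le_lam hq0 hq1 n)

lemma d_le (n : ℕ) :
    eulerLam q n - eulerKappa q ≤ eulerLam q n * q ^ (n+1) / (1-q) := by
  have hw : (0:ℝ) < 1 - q := by linarith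
  have fin : ∀ m : ℕ, eulerLam q n - eulerLam q (m+n) ≤
      eulerLam q n * (q ^ (n+1) - q ^ (m+n+1)) / (1-q) := by
    intro m
    induction m with
    | zero => simp
    | succ m ih =>
      have hstep : eulerLam q (m+1+n) = eulerLam q (m+n) * (1 - q ^ (m+n+1)) := by
        have h : m+1+n = (m+n)+1 := by omega
        rw [h, eulerLam_succ]
      have hmono : eulerLam q (m+n) ≤ eulerLam q n :=
        eulerLam_anti hq0 hq1 (Nat.le_add_left n m)
      have hc : (0:ℝ) < q ^ (m+n+1) := pow_pos hq0 _
      have hpow : q ^ (m+1+n+1) = q ^ (m+n+1) * q := by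
        rw [← pow_succ]; congr 1; omega
      rw [le_div_iff₀ hw] at ih
      rw [hstep, le_div_iff₀ hw]
      rw [hpow]
      nlinarith [mul_le_mul_of_nonneg_right hmono (mul_nonneg hc.le (mul_nonneg hq0.le hw.le))]
  have hT : Filter.Tendsto (fun m => eulerLam q (m+n)) Filter.atTop (nhds (eulerKappa q)) :=
    (eulerKappa_tendsto hq0 hq1).comp (Filter.tendsto_add_atTop_nat n)
  have hlow : eulerLam q n - eulerLam q n * q ^ (n+1) / (1-q) ≤ eulerKappa q := by
    apply ge_of_tendsto hT
    apply Filter.Eventually.of_forall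
    intro m
    have h1 := fin m
    have h2 : eulerLam q n * (q ^ (n+1) - q ^ (m+n+1)) / (1-q) ≤
        eulerLam q n * q ^ (n+1) / (1-q) := by
      gcongr
      · exact (eulerLam_pos hq0 hq1 n).le
      · linarith [pow_pos hq0 (m+n+1)]
    linarith
  linarith

lemma d_succ_le (j : ℕ) :
    eulerLam q (j+1) - eulerKappa q ≤ q * (eulerLam q j - eulerKappa q) := by
  have fin : ∀ m : ℕ, eulerLam q (j+1) - eulerLam q (m+(j+1)) ≤
      q * (eulerLam q j - eulerLam q (m+j)) := by
    intro m
    induction m with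
    | zero => simp
    | succ m ih =>
      have h1 : eulerLam q (m+1+(j+1)) = eulerLam q (m+(j+1)) * (1 - q ^ (m+j+2)) := by
        have h : m+1+(j+1) = (m+(j+1))+1 := by omega
        rw [h, eulerLam_succ]; congr 2
      have h2 : eulerLam q (m+1+j) = eulerLam q (m+j) * (1 - q ^ (m+j+1)) := by
        have h : m+1+j = (m+j)+1 := by omega
        rw [h, eulerLam_succ]
      have hmono : eulerLam q (m+(j+1)) ≤ eulerLam q (m+j) :=
        eulerLam_anti hq0 hq1 (by omega)
      have hc : (0:ℝ) < q ^ (m+j+1) := pow_pos hq0 _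
      have hpow : q ^ (m+j+2) = q ^ (m+j+1) * q := by rw [← pow_succ]
      rw [h1, h2, hpow]
      nlinarith [mul_le_mul_of_nonneg_right hmono (mul_nonneg hc.le hq0.le)]
  have t1 : Filter.Tendsto (fun m => eulerLam q (j+1) - eulerLam q (m+(j+1)))
      Filter.atTop (nhds (eulerLam q (j+1) - eulerKappa q)) :=
    tendsto_const_nhds.sub ((eulerKappa_tendsto hq0 hq1).comp (Filter.tendsto_add_atTop_nat (j+1)))
  have t2 : Filter.Tendsto (fun m => q * (eulerLam q j - eulerLam q (m+j)))
      Filter.atTop (nhds (q * (eulerLam q j - eulerKappa q))) :=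
    (tendsto_const_nhds.sub ((eulerKappa_tendsto hq0 hq1).comp
      (Filter.tendsto_add_atTop_nat j))).const_mul q
  exact le_of_tendsto_of_tendsto' t1 t2 fin

lemma d_pow (t : ℕ) : eulerLam q (2+t) - eulerKappa q ≤
    q ^ t * (eulerLam q 2 - eulerKappa q) := by
  induction t with
  | zero => simp
  | succ t ih =>
    have h1 : (2:ℕ)+(t+1) = (2+t)+1 := by omega
    rw [h1]
    calc eulerLam q ((2+t)+1) - eulerKappa q ≤ q * (eulerLam q (2+t) - eulerKappa q) :=
          d_succ_le hq0 hq1 (2+t)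
      _ ≤ q * (q ^ t * (eulerLam q 2 - eulerKappa q)) :=
          mul_le_mul_of_nonneg_left ih hq0.le
      _ = q ^ (t+1) * (eulerLam q 2 - eulerKappa q) := by rw [pow_succ]; ring

lemma eulerKappa_pos : 0 < eulerKappa q := by
  have hw : (0:ℝ) < 1 - q := by linarith
  obtain ⟨N, hN⟩ := exists_pow_lt_of_lt_one hw hq1
  have h1 : q ^ (N+1) < 1 - q :=
    lt_of_le_of_lt (pow_le_pow_of_le_one hq0.le hq1.le (by omega)) hN
  have h2 := d_le hq0 hq1 N
  have h3 : eulerLam q N * q ^ (N+1) / (1-q) < eulerLam q N := by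
    rw [div_lt_iff₀ hw]
    have := eulerLam_pos hq0 hq1 N
    nlinarith
  linarith

end aux

section poly
variable {q k : ℝ}

lemma poly2 (hq0 : 0 < q) (hq1 : q < 1) (hk0 : 0 < k)
    (hd1 : (1-q) - k ≤ q^2) :
    (1-k)*((1-q)+k) + ((1-q)-k)*(1+k) < 1 := by
  nlinarith [sq_nonneg (1-q-q^2), sq_nonneg k, sq_nonneg (q - 1/2), sq_nonneg (k - 1/2)]

lemma poly3 (hq0 : 0 < q) (hq1 : q < 1) (hk0 : 0 < k)
    (hk2 : k ≤ (1-q)*(1-q^2))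
    (hd1 : (1-q) - k ≤ q^2) (hd2 : (1-q)*(1-q^2) - k ≤ (1-q^2)*q^3) :
    (1-k)*((1-q)*(1-q^2)+k) + ((1-q)-k)*((1-q)+k) + ((1-q)*(1-q^2)-k)*(1+k) < 1 := by
  nlinarith [sq_nonneg (1-q-q^2), sq_nonneg k, sq_nonneg (q - 1/2), mul_pos hq0 hk0,
    sq_nonneg (q*k), sq_nonneg (1-q)]

lemma polyH (hq0 : 0 < q) (hq1 : q < 1) (hk0 : 0 ≤ k)
    (hd1 : (1-q) - k ≤ q^2) :
    ((1-q)*(1-q^2)*(1-q^3)*(1-k)+2*(1-q)*((1-q)*(1-q^2))+k-3*k^2)*(1-q)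
      + (1+k)*(q*((1-q)*(1-q^2)-k)) < 1-q := by
  have hw : (0:ℝ) < 1 - q := by linarith
  rcases le_total q (3/5) with h | h
  · set ko : ℝ := 1 - q - q^2 with hko_def
    have hko : ko ≤ k := by simp only [hko_def]; linarith
    have hko0 : (0:ℝ) ≤ ko := by simp only [hko_def]; nlinarith
    have hfac : 0 ≤ (3*(1-q)+q)*(k+ko) - ((1-q) - (1-q)*((1-q)*(1-q^2)*(1-q^3)) - q + q*((1-q)*(1-q^2))) := by
      have h2 : 0 ≤ 2*(3*(1-q)+q)*ko - ((1-q) - (1-q)*((1-q)*(1-q^2)*(1-q^3)) - q + q*((1-q)*(1-q^2))) := by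
        simp only [hko_def]
        nlinarith [mul_nonneg (show (0:ℝ) ≤ 3/5-q by linarith) hq0.le, pow_nonneg hq0.le 3,
          pow_nonneg hq0.le 5, mul_nonneg (pow_nonneg hq0.le 5) hw.le,
          mul_nonneg (mul_nonneg hq0.le hq0.le) (show (0:ℝ) ≤ 3/5-q by linarith)]
      nlinarith [mul_nonneg (show (0:ℝ) ≤ 3*(1-q)+q by linarith) (show (0:ℝ) ≤ k-ko by linarith)]
    have hmono : ((1-q)*(1-q^2)*(1-q^3)*(1-k)+2*(1-q)*((1-q)*(1-q^2))+k-3*k^2)*(1-q)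
        + (1+k)*(q*((1-q)*(1-q^2)-k))
        ≤ ((1-q)*(1-q^2)*(1-q^3)*(1-ko)+2*(1-q)*((1-q)*(1-q^2))+ko-3*ko^2)*(1-q)
        + (1+ko)*(q*((1-q)*(1-q^2)-ko)) := by
      nlinarith [mul_nonneg (show (0:ℝ) ≤ k - ko by linarith) hfac]
    have hend : ((1-q)*(1-q^2)*(1-q^3)*(1-ko)+2*(1-q)*((1-q)*(1-q^2))+ko-3*ko^2)*(1-q)
        + (1+ko)*(q*((1-q)*(1-q^2)-ko)) < 1-q := by
      simp only [hko_def]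
      nlinarith [sq_nonneg (q-51/100), mul_nonneg (mul_nonneg hq0.le hq0.le) hq0.le,
        mul_nonneg (show (0:ℝ) ≤ 3/5-q by linarith) hq0.le,
        mul_nonneg (mul_nonneg (show (0:ℝ) ≤ 3/5-q by linarith) hq0.le) hq0.le,
        mul_nonneg (mul_nonneg (mul_nonneg (show (0:ℝ) ≤ 3/5-q by linarith) hq0.le) hq0.le) hq0.le,
        sq_nonneg (q*(q-1/2)), pow_nonneg hq0.le 5, pow_nonneg hq0.le 7,
        mul_nonneg (pow_nonneg hq0.le 5) (show (0:ℝ) ≤ 3/5-q by linarith)]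
    linarith
  · have hbeta : (1-q) - (1-q)*((1-q)*(1-q^2)*(1-q^3)) - q + q*((1-q)*(1-q^2)) ≤ 0 := by
      nlinarith [mul_nonneg (pow_nonneg hq0.le 4) (mul_nonneg hw.le (show (0:ℝ) ≤ 1+q-q^2 by nlinarith)),
        mul_nonneg (mul_nonneg hq0.le hq0.le) (show (0:ℝ) ≤ q-3/5 by linarith),
        mul_nonneg hq0.le (show (0:ℝ) ≤ q-3/5 by linarith), sq_nonneg (1-q)]
    have hmono : ((1-q)*(1-q^2)*(1-q^3)*(1-k)+2*(1-q)*((1-q)*(1-q^2))+k-3*k^2)*(1-q)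
        + (1+k)*(q*((1-q)*(1-q^2)-k))
        ≤ ((1-q)*(1-q^2)*(1-q^3))*(1-q) + 2*(1-q)*((1-q)*(1-q^2))*(1-q)
        + q*((1-q)*(1-q^2)) := by
      nlinarith [mul_nonneg hk0 (show 0 ≤ (3*(1-q)+q)*k - ((1-q) - (1-q)*((1-q)*(1-q^2)*(1-q^3)) - q + q*((1-q)*(1-q^2))) by nlinarith [mul_nonneg (show (0:ℝ) ≤ 3*(1-q)+q by linarith) hk0])]
    have hend : ((1-q)*(1-q^2)*(1-q^3))*(1-q) + 2*(1-q)*((1-q)*(1-q^2))*(1-q)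
        + q*((1-q)*(1-q^2)) < 1-q := by
      have hr : 0 < q^6-q^5+q^4-3*q^3+q^2+4*q-2 := by
        nlinarith [mul_nonneg (show (0:ℝ) ≤ q-3/5 by linarith) (pow_nonneg hq0.le 4),
          mul_nonneg (show (0:ℝ) ≤ q-3/5 by linarith) (pow_nonneg hq0.le 2),
          mul_nonneg (show (0:ℝ) ≤ q-3/5 by linarith) hq0.le, sq_nonneg (q-3/5),
          pow_nonneg hq0.le 3, pow_nonneg hq0.le 5]
      nlinarith [mul_pos hw hr]
    linarith

lemma poly4 {e : ℝ} (hq0 : 0 < q) (hq1 : q < 1) (hk0 : 0 ≤ k)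
    (hd1 : (1-q) - k ≤ q^2)
    (he0 : 0 ≤ e) (he : e * (1-q) ≤ q * ((1-q)*(1-q^2) - k)) :
    (1-k)*((1-q)*(1-q^2)*(1-q^3)+k) + ((1-q)-k)*((1-q)*(1-q^2)+k)
      + ((1-q)*(1-q^2)-k)*((1-q)+k) + (1+k)*e < 1 := by
  have hw : (0:ℝ) < 1 - q := by linarith
  have key : (1+k)*e*(1-q) ≤ (1+k)*(q*((1-q)*(1-q^2)-k)) := by
    have := mul_le_mul_of_nonneg_left he (show (0:ℝ) ≤ 1+k by linarith)
    linarith [this]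
  have hP := polyH hq0 hq1 hk0 hd1
  have h2 : ((1-k)*((1-q)*(1-q^2)*(1-q^3)+k) + ((1-q)-k)*((1-q)*(1-q^2)+k)
      + ((1-q)*(1-q^2)-k)*((1-q)+k) + (1+k)*e) * (1-q) < 1 * (1-q) := by
    nlinarith [hP, key]
  exact (mul_lt_mul_iff_left₀ hw).mp h2

end poly

/-- For all `0 < q < 1` and every integer `n ≥ 1`, the offset satisfies `b_n(q) < 1`;
equivalently `Σ_{k=1}^n λ_{k-1}(q)·λ_{n-k}(q) < n·κ(q)² + 1`. -/
theorem postOffset_lt_one (q : ℝ) (hq0 : 0 < q) (hq1 : q < 1) (n : ℕ) (hn : 1 ≤ n) :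
    postOffset q n < 1 ∧
    (∑ k ∈ Finset.Icc 1 n, eulerLam q (k - 1) * eulerLam q (n - k)) <
      n * eulerKappa q ^ 2 + 1 := by
  have hw : (0:ℝ) < 1 - q := by linarith
  set K := eulerKappa q with hK
  set L := eulerLam q with hL
  have hL0 : L 0 = 1 := eulerLam_zero
  have hL1 : L 1 = 1 - q := by simp [hL, eulerLam, pow_one]
  have hL2 : L 2 = (1-q)*(1-q^2) := by
    have h := eulerLam_succ (q := q) 1
    rw [hL, h, ← hL, hL1]
  have hL3 : L 3 = (1-q)*(1-q^2)*(1-q^3) := by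
    have h := eulerLam_succ (q := q) 2
    rw [hL, h, ← hL, hL2]
  have hk0 : 0 < K := eulerKappa_pos hq0 hq1
  have hkle : ∀ m, K ≤ L m := eulerKappa_le_lam hq0 hq1
  have hdnn : ∀ m, 0 ≤ L m - K := fun m => sub_nonneg.2 (hkle m)
  have hlpos : ∀ m, 0 < L m := eulerLam_pos hq0 hq1
  have hlle1 : ∀ m, L m ≤ 1 := eulerLam_le_one hq0 hq1
  have hanti : Antitone L := eulerLam_anti hq0 hq1
  have hd1 : (1-q) - K ≤ q^2 := by
    have h := d_le hq0 hq1 1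
    rw [← hL, ← hK, hL1] at h
    have he : (1-q) * q^(1+1) / (1-q) = q^2 := by field_simp
    rw [he] at h; exact h
  have hd2 : (1-q)*(1-q^2) - K ≤ (1-q^2)*q^3 := by
    have h := d_le hq0 hq1 2
    rw [← hL, ← hK, hL2] at h
    have he : (1-q)*(1-q^2) * q^(2+1) / (1-q) = (1-q^2)*q^3 := by field_simp; ring
    rw [he] at h; exact h
  -- rewrite the sum
  have hs : (∑ k ∈ Finset.Icc 1 n, L (k - 1) * L (n - k)) =
      ∑ j ∈ Finset.range n, L j * L (n-1-j) := by
    rw [← Finset.Ico_add_one_right_eq_Icc, Finset.sum_Ico_eq_sum_range]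
    refine Finset.sum_congr (by congr 1) ?_
    intro i _
    congr 2 <;> omega
  have hdec : (∑ j ∈ Finset.range n, L j * L (n-1-j)) - (n:ℝ) * K^2 =
      ∑ j ∈ Finset.range n, (L j - K) * (L (n-1-j) + K) := by
    have hrefl : ∑ j ∈ Finset.range n, L (n-1-j) = ∑ j ∈ Finset.range n, L j :=
      Finset.sum_range_reflect (fun j => L j) n
    have expand : ∀ j ∈ Finset.range n, (L j - K)*(L (n-1-j) + K) =
        L j * L (n-1-j) + K * L j - K * L (n-1-j) - K^2 := fun j _ => by ring
    rw [Finset.sum_congr rfl expand, Finset.sum_sub_distrib, Finset.sum_sub_distrib,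
      Finset.sum_add_distrib, ← Finset.mul_sum, ← Finset.mul_sum, hrefl,
      Finset.sum_const, Finset.card_range, nsmul_eq_mul]
    ring
  have main : (∑ j ∈ Finset.range n, (L j - K) * (L (n-1-j) + K)) < 1 := by
    match n, hn with
    | 1, _ => 
      simp only [Finset.sum_range_one]
      norm_num [hL0]
      nlinarith
    | 2, _ =>
      rw [Finset.sum_range_succ, Finset.sum_range_one]
      norm_num [hL0, hL1]
      nlinarith [poly2 hq0 hq1 hk0 hd1]
    | 3, _ =>
      rw [Finset.sum_range_succ, Finset.sum_range_succ, Finset.sum_range_one]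
      norm_num [hL0, hL1, hL2]
      nlinarith [poly3 hq0 hq1 hk0 (hL2 ▸ hkle 2) hd1 hd2]
    | (m+4), _ =>
      have hsplit : ∑ j ∈ Finset.range (m+4), (L j - K) * (L (m+4-1-j) + K) =
          (∑ j ∈ Finset.range 3, (L j - K) * (L (m+4-1-j) + K)) +
          ∑ j ∈ Finset.Ico 3 (m+4), (L j - K) * (L (m+4-1-j) + K) := by
        rw [Finset.range_eq_Ico, ← Finset.sum_Ico_consecutive _ (Nat.zero_le 3) (by omega),
          ← Finset.range_eq_Ico]
      rw [hsplit]
      -- chunk 1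
      have hc1 : (∑ j ∈ Finset.range 3, (L j - K) * (L (m+4-1-j) + K)) ≤
          (1-K)*(L 3+K) + (L 1-K)*(L 2+K) + (L 2-K)*(L 1+K) := by
        rw [Finset.sum_range_succ, Finset.sum_range_succ, Finset.sum_range_one]
        have e0 : m+4-1-0 = m+3 := by omega
        have e1 : m+4-1-1 = m+2 := by omega
        have e2 : m+4-1-2 = m+1 := by omega
        rw [e0, e1, e2, hL0]
        have b0 : (1 - K) * (L (m+3) + K) ≤ (1-K)*(L 3+K) := by
          apply mul_le_mul_of_nonneg_left _ (by have := hkle 0; rw [hL0] at this; linarith : (0:ℝ) ≤ 1 - K)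
          have := hanti (show 3 ≤ m+3 by omega); linarith
        have b1 : (L 1 - K) * (L (m+2) + K) ≤ (L 1-K)*(L 2+K) := by
          apply mul_le_mul_of_nonneg_left _ (hdnn 1)
          have := hanti (show 2 ≤ m+2 by omega); linarith
        have b2 : (L 2 - K) * (L (m+1) + K) ≤ (L 2-K)*(L 1+K) := by
          apply mul_le_mul_of_nonneg_left _ (hdnn 2)
          have := hanti (show 1 ≤ m+1 by omega); linarith
        linarith
      -- chunk 2
      set e : ℝ := ∑ j ∈ Finset.Ico 3 (m+4), (L j - K) with he_def
      have he0 : 0 ≤ e := Finset.sum_nonneg fun j _ => hdnn j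
      have hc2 : (∑ j ∈ Finset.Ico 3 (m+4), (L j - K) * (L (m+4-1-j) + K)) ≤ (1+K)*e := by
        have step : ∀ j ∈ Finset.Ico 3 (m+4), (L j - K) * (L (m+4-1-j) + K) ≤
            (L j - K) * (1+K) := by
          intro j _
          apply mul_le_mul_of_nonneg_left _ (hdnn j)
          have := hlle1 (m+4-1-j); linarith
        calc (∑ j ∈ Finset.Ico 3 (m+4), (L j - K) * (L (m+4-1-j) + K))
            ≤ ∑ j ∈ Finset.Ico 3 (m+4), (L j - K) * (1+K) := Finset.sum_le_sum step
          _ = e * (1+K) := by rw [he_def, Finset.sum_mul]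
          _ = (1+K)*e := by ring
      have hgeo : e * (1-q) ≤ q * ((1-q)*(1-q^2) - K) := by
        have he2 : e = ∑ i ∈ Finset.range (m+1), (L (3+i) - K) := by
          rw [he_def, Finset.sum_Ico_eq_sum_range]
          congr 1
        have hb : e ≤ (∑ i ∈ Finset.range (m+1), q^(i+1)) * (L 2 - K) := by
          rw [he2, Finset.sum_mul]
          apply Finset.sum_le_sum
          intro i _
          have h := d_pow hq0 hq1 (i+1)
          rw [← hL, ← hK] at h
          have : (2:ℕ)+(i+1) = 3+i := by omega
          rw [this] at h
          exact h
        have hS0 : 0 ≤ ∑ i ∈ Finset.range (m+1), q^(i+1) :=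
          Finset.sum_nonneg fun i _ => (pow_pos hq0 (i+1)).le
        have hSw : (∑ i ∈ Finset.range (m+1), q^(i+1)) * (1-q) ≤ q := by
          have hgm := geom_sum_mul q (m+1)
          have hq' : ∑ i ∈ Finset.range (m+1), q^(i+1) =
              q * ∑ i ∈ Finset.range (m+1), q^i := by
            rw [Finset.mul_sum]
            exact Finset.sum_congr rfl fun i _ => by rw [pow_succ]; ring
          rw [hq']
          nlinarith [pow_nonneg hq0.le (m+1)]
        have hd2nn : 0 ≤ L 2 - K := hdnn 2
        calc e * (1-q) ≤ ((∑ i ∈ Finset.range (m+1), q^(i+1)) * (L 2 - K)) * (1-q) :=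
              mul_le_mul_of_nonneg_right hb hw.le
          _ = ((∑ i ∈ Finset.range (m+1), q^(i+1)) * (1-q)) * (L 2 - K) := by ring
          _ ≤ q * (L 2 - K) := mul_le_mul_of_nonneg_right hSw hd2nn
          _ = q * ((1-q)*(1-q^2) - K) := by rw [hL2]
      have hg2 : e * (1-q) ≤ q * ((1-q)*(1-q^2) - K) := hgeo
      have hfin := poly4 (e := e) hq0 hq1 hk0.le hd1 he0 hg2
      rw [hL1, hL2, hL3] at hc1
      linarith [hc1, hc2, hfin]
  have P : (∑ k ∈ Finset.Icc 1 n, L (k - 1) * L (n - k)) - (n:ℝ) * K^2 < 1 := by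
    rw [hs, hdec]; exact main
  constructor
  · show (∑ k ∈ Finset.Icc 1 n, L (k - 1) * L (n - k)) - (n:ℝ) * K^2 < 1
    exact P
  · linarith [P]
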